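/- Let G be a connected graph and v a cut vertex whose removal yields connected components C₁, ..., C_p. If C₁ and C₂ are isomorphic as graphs (via an isomorphism compatible with adjacency to v), then the vector that equals a Perron eigenvector x of L(C₁)⁻¹ on C₁, equals -x (transported by the isomorphism) on C₂, and is zero elsewhere, is an eigenvector of L(G) with eigenvalue 1/ρ(L(C₁)⁻¹). -/
import Mathlib


open Matrix BigOperators

variable {V : Type*} [Fintype V] [DecidableEq V]

/-- A cut vertex (point of articulation): its removal disconnects the graph. -/
def IsCutVertex (G : SimpleGraph V) (v : V) : Prop :=
  ¬ (G.induce {w : V | w ≠ v}).Connected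

/-- The principal submatrix of the Laplacian of `G` indexed by the vertex set `C`. -/
def lapSub (G : SimpleGraph V) [DecidableRel G.Adj] (C : Finset V) : Matrix C C ℝ :=
  (G.lapMatrix ℝ).submatrix (fun i : C => (i : V)) (fun j : C => (j : V))

/-- The Perron value (largest eigenvalue) of a symmetric real matrix. -/
noncomputable def perronValue {n : Type*} [Fintype n] (M : Matrix n n ℝ) : ℝ :=
  sSup {r : ℝ | ∃ x : n → ℝ, x ≠ 0 ∧ M *ᵥ x = r • x}

lemma lapSub_isUnit_det (G : SimpleGraph V) [DecidableRel G.Adj] (hG : G.Connected)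
    {v : V} {C : Finset V} (hv : v ∉ C) : IsUnit (lapSub G C).det := by
  classical
  rw [isUnit_iff_ne_zero]
  intro hdet
  obtain ⟨y, hy0, hy⟩ := Matrix.exists_mulVec_eq_zero_iff.2 hdet
  set Y : V → ℝ := fun w => if h : w ∈ C then y ⟨w, h⟩ else 0 with hY
  have hYa : ∀ a : C, Y (a : V) = y a := fun a => dif_pos a.2
  have hYout : ∀ w, w ∉ C → Y w = 0 := fun w h => dif_neg h
  have hinner : ∀ u : V, (G.lapMatrix ℝ *ᵥ Y) u = ∑ w ∈ C, G.lapMatrix ℝ u w * Y w := by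
    intro u
    rw [Matrix.mulVec, dotProduct]
    refine (Finset.sum_subset (Finset.subset_univ C) ?_).symm
    intro w _ hw
    rw [hYout w hw, mul_zero]
  have hquad : Matrix.toLinearMap₂' ℝ (G.lapMatrix ℝ) Y Y = 0 := by
    rw [Matrix.toLinearMap₂'_apply', dotProduct]
    have h1 : ∑ u : V, Y u * (G.lapMatrix ℝ *ᵥ Y) u
        = ∑ u ∈ C, Y u * (G.lapMatrix ℝ *ᵥ Y) u := by
      refine (Finset.sum_subset (Finset.subset_univ C) ?_).symm
      intro w _ hw
      rw [hYout w hw, zero_mul]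
    rw [h1]
    have h2 : ∑ u ∈ C, Y u * (G.lapMatrix ℝ *ᵥ Y) u
        = ∑ u : C, y u * ((lapSub G C) *ᵥ y) u := by
      rw [Finset.univ_eq_attach, ← Finset.sum_attach C (fun u => Y u * (G.lapMatrix ℝ *ᵥ Y) u)]
      refine Finset.sum_congr rfl fun a _ => ?_
      rw [hYa, hinner]
      congr 1
      rw [Matrix.mulVec, dotProduct, Finset.univ_eq_attach,
        ← Finset.sum_attach C (fun w => G.lapMatrix ℝ a w * Y w)]
      exact Finset.sum_congr rfl fun b _ => by rw [hYa]; rfl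
    rw [h2, hy]
    simp
  have hadj : ∀ i j : V, G.Reachable i j → Y i = Y j :=
    (SimpleGraph.lapMatrix_toLinearMap₂'_apply'_eq_zero_iff_forall_reachable G Y).1 hquad
  apply hy0
  funext a
  have : Y a = Y v := hadj _ _ (hG.preconnected a v)
  rw [hYa, hYout v hv] at this
  exact this

theorem stmt13 (G : SimpleGraph V) [DecidableRel G.Adj] (hG : G.Connected)
    (v : V) (hv : IsCutVertex G v)
    (C₁ C₂ : Finset V) (hd : Disjoint C₁ C₂)
    (hv1 : v ∉ C₁) (hc1 : (G.induce (C₁ : Set V)).Connected)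
    (hcl1 : ∀ w ∈ C₁, ∀ x, G.Adj w x → x = v ∨ x ∈ C₁)
    (hv2 : v ∉ C₂) (hc2 : (G.induce (C₂ : Set V)).Connected)
    (hcl2 : ∀ w ∈ C₂, ∀ x, G.Adj w x → x = v ∨ x ∈ C₂)
    (φ : C₁ ≃ C₂)
    (hφ : ∀ a b : C₁, G.Adj (a : V) (b : V) ↔ G.Adj ((φ a : V)) ((φ b : V)))
    (hφv : ∀ a : C₁, G.Adj v (a : V) ↔ G.Adj v ((φ a : V)))
    (x : C₁ → ℝ) (hx : ∀ i, 0 < x i)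
    (hxe : (lapSub G C₁)⁻¹ *ᵥ x = perronValue (lapSub G C₁)⁻¹ • x)
    (z : V → ℝ)
    (hz : ∀ w, z w = if h : w ∈ C₁ then x ⟨w, h⟩
      else if h : w ∈ C₂ then -x (φ.symm ⟨w, h⟩) else 0) :
    (G.lapMatrix ℝ) *ᵥ z = (1 / perronValue (lapSub G C₁)⁻¹) • z := by
  classical
  set ρ := perronValue (lapSub G C₁)⁻¹ with hρdef
  -- basic facts about z
  have hz0 : ∀ w, w ∉ C₁ → w ∉ C₂ → z w = 0 := fun w h1 h2 => by
    rw [hz, dif_neg h1, dif_neg h2]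
  have hz1 : ∀ a : C₁, z (a : V) = x a := fun a => by
    rw [hz, dif_pos a.2]
  have hnotC₁ : ∀ a : C₁, ((φ a : C₂) : V) ∉ C₁ := fun a h =>
    (Finset.disjoint_left.1 hd h (φ a).2)
  have hz2 : ∀ a : C₁, z ((φ a : C₂) : V) = -x a := fun a => by
    rw [hz, dif_neg (hnotC₁ a), dif_pos (φ a).2]
    congr 1
    have : (⟨((φ a : C₂) : V), (φ a).2⟩ : C₂) = φ a := rfl
    rw [this, Equiv.symm_apply_apply]
  have hzv : z v = 0 := hz0 v hv1 hv2
  -- the eigen relation for lapSub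
  have key : (lapSub G C₁) *ᵥ x = (1 / ρ) • x := by
    rcases Finset.eq_empty_or_nonempty C₁ with h | ⟨c, hc⟩
    · funext a
      exact absurd a.2 (by simp [h])
    · have hdet := lapSub_isUnit_det G hG hv1
      have h1 : x = ρ • ((lapSub G C₁) *ᵥ x) := by
        calc x = (lapSub G C₁ * (lapSub G C₁)⁻¹) *ᵥ x := by
              rw [Matrix.mul_nonsing_inv _ hdet, Matrix.one_mulVec]
          _ = (lapSub G C₁) *ᵥ ((lapSub G C₁)⁻¹ *ᵥ x) := by
              rw [← Matrix.mulVec_mulVec]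
          _ = ρ • ((lapSub G C₁) *ᵥ x) := by rw [hxe, Matrix.mulVec_smul]
      have hρ0 : ρ ≠ 0 := by
        intro h0
        have h2 := congrFun h1 ⟨c, hc⟩
        rw [h0, zero_smul] at h2
        exact absurd h2 (ne_of_gt (hx ⟨c, hc⟩))
      rw [one_div, eq_comm, inv_smul_eq_iff₀ hρ0]
      exact h1
  -- degree transport
  have hdeg : ∀ a : C₁, (G.degree ((φ a : C₂) : V) : ℝ) = (G.degree (a : V) : ℝ) := by
    intro a
    have split : ∀ (c : V) (C : Finset V), c ∈ C → v ∉ C →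
        (∀ w ∈ C, ∀ u, G.Adj w u → u = v ∨ u ∈ C) →
        (G.degree c : ℝ) = (if G.Adj c v then 1 else 0)
          + ∑ j ∈ C, (if G.Adj c j then (1:ℝ) else 0) := by
      intro c C hc hvC hcl
      rw [SimpleGraph.degree_eq_sum_if_adj]
      have h1 : ∑ j : V, (if G.Adj c j then (1:ℝ) else 0)
          = ∑ j ∈ insert v C, (if G.Adj c j then (1:ℝ) else 0) := by
        refine (Finset.sum_subset (Finset.subset_univ _) ?_).symm
        intro j _ hj
        rw [Finset.mem_insert, not_or] at hj
        rw [if_neg]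
        intro hA
        rcases hcl c hc j hA with rfl | h
        · exact hj.1 rfl
        · exact hj.2 h
      rw [h1, Finset.sum_insert hvC]
    rw [split _ C₂ (φ a).2 hv2 hcl2, split _ C₁ a.2 hv1 hcl1]
    congr 1
    · have hvv : G.Adj ((φ a : C₂) : V) v ↔ G.Adj (a : V) v :=
        ⟨fun hA => ((hφv a).2 hA.symm).symm, fun hA => ((hφv a).1 hA.symm).symm⟩
      simp only [hvv]
    · rw [← Finset.sum_coe_sort C₂ (fun j => if G.Adj ((φ a : C₂) : V) j then (1:ℝ) else 0),
        ← Finset.sum_coe_sort C₁ (fun j => if G.Adj (a : V) j then (1:ℝ) else 0)]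
      exact (Fintype.sum_equiv φ _ _ fun b => by simp only [hφ a b]).symm
  -- transport of Laplacian entries
  have hLφ : ∀ a b : C₁, G.lapMatrix ℝ ((φ a : C₂) : V) ((φ b : C₂) : V)
      = G.lapMatrix ℝ (a : V) (b : V) := by
    intro a b
    by_cases hab : a = b
    · subst hab
      have hda := hdeg a
      simp only [SimpleGraph.lapMatrix, Matrix.sub_apply, SimpleGraph.degMatrix,
        SimpleGraph.adjMatrix, Matrix.of_apply, if_pos rfl, SimpleGraph.irrefl, if_false]
      simp [hda]
    · have h1 : ((φ a : C₂) : V) ≠ ((φ b : C₂) : V) := by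
        intro h
        exact hab (φ.injective (Subtype.ext h))
      have h2 : (a : V) ≠ (b : V) := fun h => hab (Subtype.ext h)
      simp only [SimpleGraph.lapMatrix, Matrix.sub_apply, SimpleGraph.degMatrix,
        SimpleGraph.adjMatrix, Matrix.of_apply, if_neg h1, if_neg h2]
      rw [Matrix.diagonal_apply_ne _ h1, Matrix.diagonal_apply_ne _ h2]
      simp only [← hφ a b]
  -- now the pointwise computation
  funext w
  rw [Matrix.mulVec, dotProduct, Pi.smul_apply, smul_eq_mul]
  by_cases h₁ : w ∈ C₁
  · have e1 : ∑ u : V, G.lapMatrix ℝ w u * z u = ∑ u ∈ C₁, G.lapMatrix ℝ w u * z u := by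
      refine (Finset.sum_subset (Finset.subset_univ C₁) ?_).symm
      intro u _ hu
      by_cases hu2 : u ∈ C₂
      · have hne : w ≠ u := fun h => hu (h ▸ h₁)
        have hnadj : ¬ G.Adj w u := fun hA => by
          rcases hcl1 w h₁ u hA with rfl | h
          exacts [hv2 hu2, hu h]
        simp [SimpleGraph.lapMatrix, SimpleGraph.degMatrix, SimpleGraph.adjMatrix, hne, hnadj]
      · rw [hz0 u hu hu2, mul_zero]
    have e2 : ∑ u ∈ C₁, G.lapMatrix ℝ w u * z u = ((lapSub G C₁) *ᵥ x) ⟨w, h₁⟩ := by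
      rw [Matrix.mulVec, dotProduct, ← Finset.sum_coe_sort C₁ (fun u => G.lapMatrix ℝ w u * z u)]
      exact Finset.sum_congr rfl fun a _ => by rw [hz1 a]; rfl
    rw [e1, e2, key, Pi.smul_apply, smul_eq_mul, hz1 ⟨w, h₁⟩]
  · by_cases h₂ : w ∈ C₂
    · set a₀ : C₁ := φ.symm ⟨w, h₂⟩ with ha₀
      have hw : ((φ a₀ : C₂) : V) = w := by rw [ha₀, Equiv.apply_symm_apply]
      have e1 : ∑ u : V, G.lapMatrix ℝ w u * z u = ∑ u ∈ C₂, G.lapMatrix ℝ w u * z u := by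
        refine (Finset.sum_subset (Finset.subset_univ C₂) ?_).symm
        intro u _ hu
        by_cases hu1 : u ∈ C₁
        · have hne : w ≠ u := fun h => hu (h ▸ h₂)
          have hnadj : ¬ G.Adj w u := fun hA => by
            rcases hcl2 w h₂ u hA with rfl | h
            exacts [hv1 hu1, hu h]
          simp [SimpleGraph.lapMatrix, SimpleGraph.degMatrix, SimpleGraph.adjMatrix, hne, hnadj]
        · rw [hz0 u hu1 hu, mul_zero]
      have e2 : ∑ u ∈ C₂, G.lapMatrix ℝ w u * z u
          = ∑ a : C₁, G.lapMatrix ℝ w ((φ a : C₂) : V) * z ((φ a : C₂) : V) := by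
        rw [← Finset.sum_coe_sort C₂ (fun u => G.lapMatrix ℝ w u * z u),
          ← Equiv.sum_comp φ (fun b : C₂ => G.lapMatrix ℝ w (b : V) * z (b : V))]
      have e3 : ∑ a : C₁, G.lapMatrix ℝ w ((φ a : C₂) : V) * z ((φ a : C₂) : V)
          = -((lapSub G C₁) *ᵥ x) a₀ := by
        rw [Matrix.mulVec, dotProduct, ← Finset.sum_neg_distrib]
        refine Finset.sum_congr rfl fun a _ => ?_
        rw [hz2 a]
        conv_lhs => rw [← hw]
        rw [hLφ a₀ a]
        have hls : lapSub G C₁ a₀ a = G.lapMatrix ℝ (a₀ : V) (a : V) := rfl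
        rw [hls]
        ring
      rw [e1, e2, e3, key, Pi.smul_apply, smul_eq_mul]
      have : z w = -x a₀ := by rw [← hw, hz2 a₀]
      rw [this]
      ring
    · -- w ∉ C₁ ∪ C₂ : both sides are as follows
      have hzw : z w = 0 := hz0 w h₁ h₂
      rw [hzw, mul_zero]
      by_cases hwv : w = v
      · subst hwv
        have e1 : ∀ u : V, G.lapMatrix ℝ w u * z u = -(if G.Adj w u then z u else 0) := by
          intro u
          by_cases huw : w = u
          · subst huw
            simp [hzw]
          · simp only [SimpleGraph.lapMatrix, Matrix.sub_apply, SimpleGraph.degMatrix,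
              SimpleGraph.adjMatrix, Matrix.of_apply, if_neg huw]
            by_cases hA : G.Adj w u <;> simp [hA, Matrix.diagonal_apply_ne _ huw]
        have hS : ∑ u : V, (if G.Adj w u then z u else 0) = 0 := by
          have h1 : ∑ u : V, (if G.Adj w u then z u else 0)
              = ∑ u ∈ C₁ ∪ C₂, (if G.Adj w u then z u else 0) := by
            refine (Finset.sum_subset (Finset.subset_univ _) ?_).symm
            intro u _ hu
            rw [Finset.mem_union, not_or] at hu
            rw [hz0 u hu.1 hu.2, ite_self]
          rw [h1, Finset.sum_union hd]
          have h2 : ∑ u ∈ C₂, (if G.Adj w u then z u else 0)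
              = -∑ u ∈ C₁, (if G.Adj w u then z u else 0) := by
            rw [← Finset.sum_coe_sort C₂ (fun u => if G.Adj w u then z u else 0),
              ← Finset.sum_coe_sort C₁ (fun u => if G.Adj w u then z u else 0),
              ← Finset.sum_neg_distrib]
            refine (Fintype.sum_equiv φ _ _ fun a => ?_).symm
            rw [hz1 a, hz2 a]
            by_cases hA : G.Adj w (a : V)
            · rw [if_pos hA, if_pos ((hφv a).1 hA)]
            · rw [if_neg hA, if_neg (fun h => hA ((hφv a).2 h)), neg_zero]
          rw [h2]
          ring
        calc ∑ u : V, G.lapMatrix ℝ w u * z u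
            = ∑ u : V, -(if G.Adj w u then z u else 0) :=
              Finset.sum_congr rfl fun u _ => e1 u
          _ = -∑ u : V, (if G.Adj w u then z u else 0) := by rw [Finset.sum_neg_distrib]
          _ = 0 := by rw [hS, neg_zero]
      · -- w not v, not in C₁ ∪ C₂: every term zero
        rw [Finset.sum_eq_zero]
        intro u _
        by_cases hu1 : u ∈ C₁
        · have hne : w ≠ u := fun h => h₁ (h ▸ hu1)
          have hnadj : ¬ G.Adj w u := fun hA => by
            rcases hcl1 u hu1 w hA.symm with rfl | h
            exacts [hwv rfl, h₁ h]
          simp [SimpleGraph.lapMatrix, SimpleGraph.degMatrix, SimpleGraph.adjMatrix, hne, hnadj]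
        · by_cases hu2 : u ∈ C₂
          · have hne : w ≠ u := fun h => h₂ (h ▸ hu2)
            have hnadj : ¬ G.Adj w u := fun hA => by
              rcases hcl2 u hu2 w hA.symm with rfl | h
              exacts [hwv rfl, h₂ h]
            simp [SimpleGraph.lapMatrix, SimpleGraph.degMatrix, SimpleGraph.adjMatrix, hne, hnadj]
          · rw [hz0 u hu1 hu2, mul_zero]
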